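/- A weakly chained diagonally dominant matrix is invertible. That is, if A is an n×n real matrix such that every row i satisfies |A_{ii}| ≥ ∑_{j≠i} |A_{ij}|, and for every row i there is a path i = k_0, k_1, ..., k_m in the directed graph of A (edges (p,q) whenever A_{pq} ≠ 0) ending at a row k_m that is strictly diagonally dominant (|A_{k_m k_m}| > ∑_{j≠k_m} |A_{k_m j}|), then det A ≠ 0. -/

import Mathlib

open Finset

lemma key_lb {n : ℕ} (A : Matrix (Fin n) (Fin n) ℝ) (x : Fin n → ℝ)
    (hAx : A.mulVec x = 0) (M : ℝ) (i : Fin n) (hi : |x i| = M) :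
    |A i i| * M ≤ ∑ j ∈ univ.erase i, |A i j| * |x j| := by
  have hrow : ∑ j, A i j * x j = 0 := congrFun hAx i
  have hsplit : A i i * x i + ∑ j ∈ univ.erase i, A i j * x j = ∑ j, A i j * x j :=
    Finset.add_sum_erase _ (fun j => A i j * x j) (mem_univ i)
  have h1 : A i i * x i = -∑ j ∈ univ.erase i, A i j * x j := by linarith [hsplit, hrow]
  calc |A i i| * M = |A i i * x i| := by rw [abs_mul, hi]
    _ = |∑ j ∈ univ.erase i, A i j * x j| := by rw [h1, abs_neg]
    _ ≤ ∑ j ∈ univ.erase i, |A i j * x j| := Finset.abs_sum_le_sum_abs _ _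
    _ = ∑ j ∈ univ.erase i, |A i j| * |x j| := by simp [abs_mul]

/-- A weakly chained diagonally dominant real matrix is invertible. -/
theorem wcdd_det_ne_zero {n : ℕ} (A : Matrix (Fin n) (Fin n) ℝ)
    (hdd : ∀ i, ∑ j ∈ Finset.univ.filter (fun j => j ≠ i), |A i j| ≤ |A i i|)
    (hchain : ∀ i, ∃ k, Relation.ReflTransGen (fun p q => A p q ≠ 0) i k ∧
      ∑ j ∈ Finset.univ.filter (fun j => j ≠ k), |A k j| < |A k k|) :
    A.det ≠ 0 := by
  intro hdet
  obtain ⟨x, hx, hAx⟩ := Matrix.exists_mulVec_eq_zero_iff.mpr hdet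
  obtain ⟨i0, hi0⟩ := Function.ne_iff.mp hx
  simp only [Pi.zero_apply] at hi0
  haveI : Nonempty (Fin n) := ⟨i0⟩
  set M := Finset.univ.sup' Finset.univ_nonempty (fun j => |x j|) with hMdef
  have hM : ∀ j, |x j| ≤ M := fun j => Finset.le_sup' (fun j => |x j|) (Finset.mem_univ j)
  have hMpos : 0 < M := lt_of_lt_of_le (abs_pos.mpr hi0) (hM i0)
  have hfe : ∀ k : Fin n, Finset.univ.filter (fun j => j ≠ k) = Finset.univ.erase k :=
    fun k => Finset.filter_ne' Finset.univ k
  have hprop : ∀ i, |x i| = M → ∀ j, A i j ≠ 0 → |x j| = M := by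
    intro i hi j hAij
    by_cases hji : j = i
    · rw [hji]; exact hi
    · have c1 := key_lb A x hAx M i hi
      have hle : ∀ p ∈ Finset.univ.erase i, |A i p| * |x p| ≤ |A i p| * M :=
        fun p _ => mul_le_mul_of_nonneg_left (hM p) (abs_nonneg _)
      have c2 : ∑ p ∈ Finset.univ.erase i, |A i p| * |x p|
          ≤ ∑ p ∈ Finset.univ.erase i, |A i p| * M := Finset.sum_le_sum hle
      have c3 : ∑ p ∈ Finset.univ.erase i, |A i p| * M ≤ |A i i| * M := by
        rw [← Finset.sum_mul]
        exact mul_le_mul_of_nonneg_right (by rw [← hfe]; exact hdd i) hMpos.le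
      have heq : ∀ p ∈ Finset.univ.erase i, |A i p| * |x p| = |A i p| * M :=
        (Finset.sum_eq_sum_iff_of_le hle).mp (le_antisymm c2 (by linarith))
      have hj := heq j (Finset.mem_erase.mpr ⟨hji, Finset.mem_univ j⟩)
      exact mul_left_cancel₀ (abs_ne_zero.mpr hAij) hj
  obtain ⟨i1, -, hi1⟩ := Finset.exists_mem_eq_sup' (Finset.univ_nonempty (α := Fin n))
    (fun j => |x j|)
  obtain ⟨k, hpath, hstrict⟩ := hchain i1
  have hk : |x k| = M := by
    clear hstrict
    induction hpath with
    | refl => exact hi1.symm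
    | tail _ h ih => exact hprop _ ih _ h
  have c1 := key_lb A x hAx M k hk
  have c2 : ∑ p ∈ Finset.univ.erase k, |A k p| * |x p|
      ≤ (∑ p ∈ Finset.univ.erase k, |A k p|) * M := by
    rw [Finset.sum_mul]
    exact Finset.sum_le_sum (fun p _ => mul_le_mul_of_nonneg_left (hM p) (abs_nonneg _))
  have c3 : (∑ p ∈ Finset.univ.erase k, |A k p|) * M < |A k k| * M :=
    mul_lt_mul_of_pos_right (by rw [← hfe]; exact hstrict) hMpos
  linarith
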